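/- Let α ≥ 0, β ≠ 0 and τ > 0 be real numbers. Then there exists ξ₀ > 0 such that for every real ξ ≥ ξ₀ one has α² − 4 β² ξ < 0 and every complex root λ of λ² + α λ + β² ξ = 0 satisfies |1 + τ λ| > 1. -/

import Mathlib

/-- Absolute instability of the forward Euler scheme (gradient descent-ascent
with fixed step `τ > 0`) for the linearized GAN: for `α ≥ 0`, `β ≠ 0` there is
`ξ₀ > 0` such that for all `ξ ≥ ξ₀` the discriminant `α² − 4β²ξ` is negative
and every complex root `λ` of `λ² + αλ + β²ξ = 0` has `|1 + τλ| > 1`. -/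
theorem euler_scheme_absolutely_unstable (α β τ : ℝ)
    (hα : 0 ≤ α) (hβ : β ≠ 0) (hτ : 0 < τ) :
    ∃ ξ₀ : ℝ, 0 < ξ₀ ∧ ∀ ξ : ℝ, ξ₀ ≤ ξ →
      α ^ 2 - 4 * β ^ 2 * ξ < 0 ∧
      ∀ lam : ℂ, lam ^ 2 + (α : ℂ) * lam + ((β : ℂ) ^ 2 * (ξ : ℂ)) = 0 →
        1 < ‖1 + (τ : ℂ) * lam‖ := by
  have hb2 : (0:ℝ) < β ^ 2 := by positivity
  refine ⟨α ^ 2 / (4 * β ^ 2) + α / (τ * β ^ 2) + 1, by positivity, ?_⟩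
  intro ξ hξ
  have key1 : τ ^ 2 * β ^ 2 * (α / (τ * β ^ 2)) = τ * α := by
    field_simp
  have key2 : (0:ℝ) ≤ τ ^ 2 * β ^ 2 * (α ^ 2 / (4 * β ^ 2)) := by positivity
  have key3 : 4 * β ^ 2 * (α ^ 2 / (4 * β ^ 2)) = α ^ 2 := by
    field_simp
  have key4 : (0:ℝ) ≤ 4 * β ^ 2 * (α / (τ * β ^ 2)) := by positivity
  have hpos : (0:ℝ) < τ ^ 2 * β ^ 2 := by positivity
  have hmul1 := mul_le_mul_of_nonneg_left hξ hpos.le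
  have hmul2 := mul_le_mul_of_nonneg_left hξ (by positivity : (0:ℝ) ≤ 4 * β ^ 2)
  have hd : α ^ 2 - 4 * β ^ 2 * ξ < 0 := by nlinarith [hmul2, key3, key4, hb2]
  have hgain : τ * α < τ ^ 2 * (β ^ 2 * ξ) := by
    nlinarith [hmul1, key1, key2, hpos]
  refine ⟨hd, ?_⟩
  intro lam hl
  set x := lam.re with hx
  set y := lam.im with hy
  have hre : x ^ 2 - y ^ 2 + α * x + β ^ 2 * ξ = 0 := by
    have := congrArg Complex.re hl
    simp [pow_two, Complex.mul_re, Complex.mul_im, ← hx, ← hy] at this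
    linarith
  have him : y * (2 * x + α) = 0 := by
    have := congrArg Complex.im hl
    simp [pow_two, Complex.mul_re, Complex.mul_im, ← hx, ← hy] at this
    linarith
  have hyne : y ≠ 0 := by
    intro h0
    rw [h0] at hre
    nlinarith [sq_nonneg (2 * x + α)]
  have hxval : 2 * x + α = 0 := by
    rcases mul_eq_zero.mp him with h | h
    · exact absurd h hyne
    · exact h
  have habs : (‖1 + (τ : ℂ) * lam‖) ^ 2
      = (1 + τ * x) ^ 2 + (τ * y) ^ 2 := by
    rw [Complex.sq_norm, Complex.normSq_apply]
    simp [Complex.mul_re, Complex.mul_im, ← hx, ← hy]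
    ring
  have h5 : τ ^ 2 * x ^ 2 - τ ^ 2 * y ^ 2 + τ ^ 2 * α * x + τ ^ 2 * (β ^ 2 * ξ) = 0 := by
    linear_combination τ ^ 2 * hre
  have h6 : 2 * (τ * x) + τ * α = 0 := by linear_combination τ * hxval
  have h7 : 2 * (τ ^ 2 * x ^ 2) + τ ^ 2 * α * x = 0 := by
    linear_combination (τ ^ 2 * x) * hxval
  have hA := norm_nonneg (1 + (τ : ℂ) * lam)
  nlinarith [habs, hA, h5, h6, h7, hgain]
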